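/- Let (W,S) be a Coxeter system with finite index set B and with W a finite group, and let w₀ ∈ W be a longest element, i.e. ℓ(w) ≤ ℓ(w₀) for all w ∈ W. Then for every n : ℕ and every w ∈ W, the longest element is at most as likely as w for the lazy simple random walk: N n w₀ ≤ N n w. -/

import Mathlib

open List

namespace LazyWalkAux

open List


theorem zmod2_add_self : ∀ a : ZMod 2, a + a = 0 := by decide
theorem zmod2_cases : ∀ a : ZMod 2, a = 0 ∨ a = 1 := by decide
theorem zmod2_one_ne_zero : (1 : ZMod 2) ≠ 0 := by decide

open Classical in
/-- Indicator function with values in `ZMod 2`. -/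
noncomputable def dlt {W : Type*} (x y : W) : ZMod 2 := if x = y then 1 else 0

theorem dlt_self {W : Type*} (x : W) : dlt x x = 1 := by simp [dlt]

theorem dlt_eq_one_iff {W : Type*} {x y : W} : dlt x y = 1 ↔ x = y := by
  unfold dlt; split <;> simp_all

theorem dlt_conj {W : Type*} [Group W] (u x y : W) :
    dlt (u * x * u⁻¹) y = dlt x (u⁻¹ * y * u) := by
  unfold dlt
  congr 1
  simp only [eq_iff_iff]
  constructor
  · rintro rfl; group
  · rintro rfl; group

theorem sum_range_add' {A : Type*} [AddCommMonoid A] (f : ℕ → A) (m n : ℕ) :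
    ∑ k ∈ Finset.range (m + n), f k
      = (∑ k ∈ Finset.range m, f k) + ∑ k ∈ Finset.range n, f (m + k) := by
  induction n with
  | zero => simp
  | succ n ih => rw [← Nat.add_assoc, Finset.sum_range_succ, ih, Finset.sum_range_succ, add_assoc]

variable {B W : Type*} [Group W] {M : CoxeterMatrix B} (cs : CoxeterSystem M W)

/-- The "inversion-counting" permutation representation: the generator `i` acts on
`W × ZMod 2` by conjugating the first coordinate by `s i` and flipping the second
coordinate iff the first coordinate equals `s i`. -/
noncomputable def sigma (i : B) : Equiv.Perm (W × ZMod 2) :=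
  Function.Involutive.toPerm
    (fun p => (cs.simple i * p.1 * cs.simple i, p.2 + dlt p.1 (cs.simple i)))
    (by
      rintro ⟨x, ε⟩
      have h1 : cs.simple i * (cs.simple i * x * cs.simple i) * cs.simple i = x := by
        simp [mul_assoc, cs.simple_mul_simple_cancel_left, cs.simple_mul_simple_self]
      have h2 : dlt (cs.simple i * x * cs.simple i) (cs.simple i) = dlt x (cs.simple i) := by
        rw [show cs.simple i * x * cs.simple i = cs.simple i * x * (cs.simple i)⁻¹ by
              rw [cs.inv_simple],
            dlt_conj]
        congr 1
        rw [cs.inv_simple]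
        simp [cs.simple_mul_simple_cancel_left]
      simp only
      rw [h1, h2, add_assoc, zmod2_add_self, add_zero])

theorem sigma_apply (i : B) (x : W) (ε : ZMod 2) :
    sigma cs i (x, ε) = (cs.simple i * x * cs.simple i, ε + dlt x (cs.simple i)) := rfl

theorem sigma_mul_apply (i j : B) (x : W) (ε : ZMod 2) :
    (sigma cs i * sigma cs j) (x, ε) =
      (cs.simple i * cs.simple j * x * (cs.simple j * cs.simple i),
        ε + dlt x (cs.simple j) + dlt x (cs.simple j * cs.simple i * cs.simple j)) := by
  rw [Equiv.Perm.mul_apply, sigma_apply, sigma_apply]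
  have h2 : dlt (cs.simple j * x * cs.simple j) (cs.simple i)
      = dlt x (cs.simple j * cs.simple i * cs.simple j) := by
    rw [show cs.simple j * x * cs.simple j = cs.simple j * x * (cs.simple j)⁻¹ by
          rw [cs.inv_simple], dlt_conj, cs.inv_simple]
  rw [h2, Prod.mk.injEq]
  refine ⟨by group, rfl⟩

theorem sigma_mul_pow_apply (i j : B) (n : ℕ) (x : W) (ε : ZMod 2) :
    ((sigma cs i * sigma cs j) ^ n) (x, ε) =
      ((cs.simple i * cs.simple j) ^ n * x * (cs.simple j * cs.simple i) ^ n,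
        ε + ∑ k ∈ Finset.range (2 * n),
          dlt x ((cs.simple j * cs.simple i) ^ k * cs.simple j)) := by
  induction n generalizing x ε with
  | zero => simp
  | succ n ih =>
    set si := cs.simple i with hsi
    set sj := cs.simple j with hsj
    have e1 : (si * sj)⁻¹ = sj * si := by rw [mul_inv_rev, hsi, hsj, cs.inv_simple, cs.inv_simple]
    rw [pow_succ, Equiv.Perm.mul_apply, sigma_mul_apply, ih]
    have key : ∀ k : ℕ,
        dlt (si * sj * x * (sj * si)) ((sj * si) ^ k * sj)
          = dlt x ((sj * si) ^ (k + 2) * sj) := by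
      intro k
      rw [show si * sj * x * (sj * si) = (si * sj) * x * (si * sj)⁻¹ by rw [e1],
          dlt_conj]
      congr 1
      rw [e1]
      calc (sj * si) * ((sj * si) ^ k * sj) * (si * sj)
          = ((sj * si) * (sj * si) ^ k) * (sj * (si * sj)) := by simp only [mul_assoc]
        _ = (sj * si) ^ (k + 1) * (sj * (si * sj)) := by rw [← pow_succ']
        _ = (sj * si) ^ (k + 1) * ((sj * si) * sj) := by simp only [mul_assoc]
        _ = (sj * si) ^ (k + 2) * sj := by rw [← mul_assoc, ← pow_succ]
    have hsum : ∑ k ∈ Finset.range (2 * n), dlt (si * sj * x * (sj * si)) ((sj * si) ^ k * sj)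
        = ∑ k ∈ Finset.range (2 * n), dlt x ((sj * si) ^ (k + 2) * sj) :=
      Finset.sum_congr rfl fun k _ => key k
    rw [hsum, Prod.mk.injEq]
    constructor
    · rw [pow_succ (si * sj), pow_succ' (sj * si)]
      simp only [mul_assoc]
      rfl
    · rw [show 2 * (n + 1) = 2 + 2 * n by ring, sum_range_add' _ 2 (2 * n)]
      have h2s : ∑ k ∈ Finset.range 2, dlt x ((sj * si) ^ k * sj)
          = dlt x sj + dlt x (sj * si * sj) := by
        rw [Finset.sum_range_succ, Finset.sum_range_one, pow_zero, one_mul, pow_one]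
      have h3s : ∑ k ∈ Finset.range (2 * n), dlt x ((sj * si) ^ (2 + k) * sj)
          = ∑ k ∈ Finset.range (2 * n), dlt x ((sj * si) ^ (k + 2) * sj) :=
        Finset.sum_congr rfl fun k _ => by rw [Nat.add_comm]
      rw [h2s, h3s]
      abel

theorem sigma_liftable : M.IsLiftable (fun i => sigma cs i) := by
  intro i j
  by_cases h0 : M i j = 0
  · rw [h0, pow_zero]
  · apply Equiv.ext
    rintro ⟨x, ε⟩
    rw [sigma_mul_pow_apply, cs.simple_mul_simple_pow, cs.simple_mul_simple_pow', one_mul, mul_one,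
        Equiv.Perm.one_apply]
    have hper : ∀ k : ℕ, ((cs.simple j * cs.simple i) ^ (M i j + k) * cs.simple j)
        = (cs.simple j * cs.simple i) ^ k * cs.simple j := by
      intro k
      rw [pow_add, cs.simple_mul_simple_pow', one_mul]
    have : ∑ k ∈ Finset.range (2 * M i j),
        dlt x ((cs.simple j * cs.simple i) ^ k * cs.simple j) = 0 := by
      rw [show 2 * M i j = M i j + M i j by ring, sum_range_add' _ (M i j) (M i j)]
      have : ∑ k ∈ Finset.range (M i j),
          dlt x ((cs.simple j * cs.simple i) ^ (M i j + k) * cs.simple j)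
          = ∑ k ∈ Finset.range (M i j),
          dlt x ((cs.simple j * cs.simple i) ^ k * cs.simple j) :=
        Finset.sum_congr rfl fun k _ => by rw [hper k]
      rw [this, zmod2_add_self]
    rw [this, add_zero]

/-- The parity representation as a homomorphism. -/
noncomputable def phi : W →* Equiv.Perm (W × ZMod 2) :=
  cs.lift ⟨fun i => sigma cs i, sigma_liftable cs⟩

theorem phi_simple (i : B) : phi cs (cs.simple i) = sigma cs i :=
  cs.lift_apply_simple (sigma_liftable cs) i

/-- The parity of the number of times `x` occurs in the right inversion sequence of any
word for `w`; well-defined by the homomorphism property. -/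
noncomputable def cfn (w x : W) : ZMod 2 := (phi cs w (x, 0)).2

theorem phi_wordProd (ω : List B) (x : W) (ε : ZMod 2) :
    phi cs (cs.wordProd ω) (x, ε)
      = (cs.wordProd ω * x * (cs.wordProd ω)⁻¹,
          ε + ((cs.rightInvSeq ω).map (fun t => dlt x t)).sum) := by
  induction ω generalizing ε with
  | nil => simp
  | cons i ω ih =>
    rw [cs.wordProd_cons, map_mul, Equiv.Perm.mul_apply, ih, phi_simple, sigma_apply]
    have hris : cs.rightInvSeq (i :: ω)
        = ((cs.wordProd ω)⁻¹ * cs.simple i * cs.wordProd ω) :: cs.rightInvSeq ω := rfl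
    rw [hris, Prod.mk.injEq]
    constructor
    · rw [mul_inv_rev, cs.inv_simple]
      group
    · rw [show cs.wordProd ω * x * (cs.wordProd ω)⁻¹
          = cs.wordProd ω * x * (cs.wordProd ω)⁻¹ from rfl, dlt_conj]
      rw [List.map_cons, List.sum_cons]
      abel

theorem phi_apply (w x : W) (ε : ZMod 2) :
    phi cs w (x, ε) = (w * x * w⁻¹, ε + cfn cs w x) := by
  obtain ⟨ω, rfl⟩ := cs.wordProd_surjective w
  rw [phi_wordProd, cfn, phi_wordProd, zero_add]

theorem cfn_wordProd (ω : List B) (x : W) :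
    cfn cs (cs.wordProd ω) x = ((cs.rightInvSeq ω).map (fun t => dlt x t)).sum := by
  rw [cfn, phi_wordProd, zero_add]

theorem cfn_mul (u v x : W) : cfn cs (u * v) x = cfn cs v x + cfn cs u (v * x * v⁻¹) := by
  have h2 : phi cs (u * v) (x, 0)
      = (u * (v * x * v⁻¹) * u⁻¹, (0 + cfn cs v x) + cfn cs u (v * x * v⁻¹)) := by
    rw [map_mul, Equiv.Perm.mul_apply, phi_apply, phi_apply]
  have := congrArg Prod.snd h2
  simpa [cfn] using this

theorem cfn_simple (i : B) (x : W) : cfn cs (cs.simple i) x = dlt x (cs.simple i) := by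
  rw [cfn, phi_simple, sigma_apply, zero_add]

theorem mem_ris_of_cfn_ne_zero {ω : List B} {x : W} (h : cfn cs (cs.wordProd ω) x ≠ 0) :
    x ∈ cs.rightInvSeq ω := by
  by_contra hx
  apply h
  rw [cfn_wordProd]
  apply List.sum_eq_zero
  intro a ha
  obtain ⟨t, ht, rfl⟩ := List.mem_map.mp ha
  have : x ≠ t := fun h' => hx (h' ▸ ht)
  simp [dlt, this]

theorem sum_map_dlt_of_nodup {l : List W} {x : W} (hn : l.Nodup) (hx : x ∈ l) :
    (l.map (fun t => dlt x t)).sum = 1 := by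
  induction l with
  | nil => simp at hx
  | cons a l ih =>
    rw [List.map_cons, List.sum_cons]
    rcases List.mem_cons.mp hx with rfl | hx'
    · have hnot : x ∉ l := (List.nodup_cons.mp hn).1
      have : (l.map (fun t => dlt x t)).sum = 0 := by
        apply List.sum_eq_zero
        intro b hb
        obtain ⟨t, ht, rfl⟩ := List.mem_map.mp hb
        have : x ≠ t := fun h' => hnot (h' ▸ ht)
        simp [dlt, this]
      rw [this, dlt_self, add_zero]
    · have hne : x ≠ a := by
        rintro rfl
        exact (List.nodup_cons.mp hn).1 hx'
      rw [ih (List.nodup_cons.mp hn).2 hx']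
      simp [dlt, hne]

theorem cfn_of_mem_reduced {ω : List B} (hω : cs.IsReduced ω) {x : W}
    (hx : x ∈ cs.rightInvSeq ω) : cfn cs (cs.wordProd ω) x = 1 := by
  rw [cfn_wordProd]
  exact sum_map_dlt_of_nodup (hω.nodup_rightInvSeq) hx

theorem cfn_refl_self {t : W} (ht : cs.IsReflection t) : cfn cs t t = 1 := by
  obtain ⟨u, i, rfl⟩ := ht
  set si := cs.simple i with hsi
  have h1 : cfn cs (u * (si * u⁻¹)) (u * si * u⁻¹)
      = cfn cs (si * u⁻¹) (u * si * u⁻¹) + cfn cs u si := by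
    rw [cfn_mul]
    congr 2
    rw [mul_inv_rev, inv_inv, hsi, cs.inv_simple]
    calc cs.simple i * u⁻¹ * (u * cs.simple i * u⁻¹) * (u * cs.simple i)
        = cs.simple i * (cs.simple i * cs.simple i) := by group
      _ = cs.simple i := by rw [cs.simple_mul_simple_self, mul_one]
  have h2 : cfn cs (si * u⁻¹) (u * si * u⁻¹) = cfn cs u⁻¹ (u * si * u⁻¹) + 1 := by
    rw [cfn_mul]
    congr 1
    have : u⁻¹ * (u * si * u⁻¹) * u⁻¹⁻¹ = si := by group
    rw [this, hsi, cfn_simple, dlt_self]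
  have h3 : cfn cs u⁻¹ (u * si * u⁻¹) + cfn cs u si = 0 := by
    have h0 : cfn cs (u⁻¹ * u) si = 0 := by
      rw [inv_mul_cancel]
      have : phi cs (1 : W) (si, 0) = (si, 0) := by rw [map_one, Equiv.Perm.one_apply]
      rw [cfn, this]
    rw [cfn_mul] at h0
    rw [← h0]
    abel
  have : u * (si * u⁻¹) = u * si * u⁻¹ := by group
  rw [this] at h1
  rw [h1, h2]
  calc cfn cs u⁻¹ (u * si * u⁻¹) + 1 + cfn cs u si
      = (cfn cs u⁻¹ (u * si * u⁻¹) + cfn cs u si) + 1 := by abel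
    _ = 1 := by rw [h3, zero_add]

theorem cfn_eq_one_iff {w t : W} (ht : cs.IsReflection t) :
    cfn cs w t = 1 ↔ cs.length (w * t) < cs.length w := by
  constructor
  · intro h
    obtain ⟨ω, hred, rfl⟩ := cs.exists_reduced_word' w
    have : t ∈ cs.rightInvSeq ω :=
      mem_ris_of_cfn_ne_zero cs (h ▸ zmod2_one_ne_zero)
    exact (cs.isRightInversion_of_mem_rightInvSeq hred this).2
  · intro h
    have hv : ¬ cs.length ((w * t) * t) < cs.length (w * t) := by
      rw [mul_assoc, ht.mul_self, mul_one]
      omega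
    have hv0 : cfn cs (w * t) t = 0 := by
      rcases zmod2_cases (cfn cs (w * t) t) with h' | h'
      · exact h'
      · exfalso
        apply hv
        obtain ⟨ω, hred, hw⟩ := cs.exists_reduced_word' (w * t)
        rw [hw] at h' ⊢
        have : t ∈ cs.rightInvSeq ω := mem_ris_of_cfn_ne_zero cs (h' ▸ zmod2_one_ne_zero)
        exact (cs.isRightInversion_of_mem_rightInvSeq hred this).2
    have hc : cfn cs ((w * t) * t) t = cfn cs t t + cfn cs (w * t) (t * t * t⁻¹) := cfn_mul cs _ _ _
    have htt : t * t * t⁻¹ = t := by rw [ht.mul_self, one_mul, ht.inv]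
    rw [htt] at hc
    have hwt : w * t * t = w := by rw [mul_assoc, ht.mul_self, mul_one]
    rw [hwt, cfn_refl_self cs ht, hv0, add_zero] at hc
    exact hc

open Real

section Geom

variable {B : Type*} [Fintype B] [DecidableEq B] (M : CoxeterMatrix B)

/-- Entries of the cosine matrix of `M`. (Note that `π / 0 = 0` in Lean, so entries
`M k l = 0`, representing `∞`, correctly give the value `-1`.) -/
noncomputable def gC (k l : B) : ℝ := - Real.cos (Real.pi / (M k l : ℝ))

theorem gC_diag (k : B) : gC M k k = 1 := by
  rw [gC, M.diagonal]
  simp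

theorem gC_symm (k l : B) : gC M k l = gC M l k := by
  rw [gC, gC, M.symmetric]

/-- The bilinear pairing of `(Pi.single k 1 : B → ℝ)` against `v`. -/
noncomputable def gform (k : B) : (B → ℝ) →ₗ[ℝ] ℝ where
  toFun v := ∑ x, gC M k x * v x
  map_add' u v := by
    simp [mul_add, Finset.sum_add_distrib]
  map_smul' c v := by
    simp only [Pi.smul_apply, smul_eq_mul, RingHom.id_apply]
    rw [Finset.mul_sum]
    exact Finset.sum_congr rfl fun x _ => by ring

theorem gform_single (k l : B) : gform M k ((Pi.single l 1 : B → ℝ)) = gC M k l := by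
  show (∑ x, gC M k x * (Pi.single l 1 : B → ℝ) x) = gC M k l
  rw [Finset.sum_eq_single l]
  · rw [Pi.single_eq_same, mul_one]
  · intro b _ hb
    rw [Pi.single_eq_of_ne hb, mul_zero]
  · intro h
    exact absurd (Finset.mem_univ l) h

/-- The geometric reflection associated to the generator `k`. -/
noncomputable def grefl (k : B) : Module.End ℝ (B → ℝ) :=
  LinearMap.id - ((2 : ℝ) • gform M k).smulRight ((Pi.single k 1 : B → ℝ))

theorem grefl_apply (k : B) (v : B → ℝ) :
    grefl M k v = v - (2 * gform M k v) • (Pi.single k 1 : B → ℝ) := by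
  simp [grefl, LinearMap.sub_apply, LinearMap.smulRight_apply, LinearMap.smul_apply,
    smul_eq_mul]

theorem grefl_liftable : M.IsLiftable (fun k => grefl M k) := by
  intro k l
  show (grefl M k * grefl M l) ^ M k l = 1
  by_cases hkl : k = l
  · subst hkl
    rw [M.diagonal, pow_one]
    apply LinearMap.ext
    intro v
    have h1 : grefl M k (grefl M k v) = v := by
      rw [grefl_apply, grefl_apply, map_sub, map_smul, gform_single, gC_diag]
      funext x
      simp only [Pi.sub_apply, Pi.smul_apply, smul_eq_mul]
      ring
    simpa [Module.End.mul_apply] using h1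
  by_cases h0 : M k l = 0
  · rw [h0, pow_zero]
  have hm2 : 2 ≤ M k l := by
    have := M.off_diagonal k l hkl
    omega
  set m : ℕ := M k l with hm
  set c : ℝ := Real.cos (Real.pi / (m : ℝ)) with hc
  set ek : B → ℝ := (Pi.single k 1 : B → ℝ) with hek
  set el : B → ℝ := (Pi.single l 1 : B → ℝ) with hel
  set A : Module.End ℝ (B → ℝ) := grefl M k * grefl M l with hA
  have hmR : (1 : ℝ) < (m : ℝ) := by
    have : (2:ℝ) ≤ (m:ℝ) := by exact_mod_cast hm2
    linarith
  have hmpos : (0:ℝ) < (m:ℝ) := by linarith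
  -- the four pairings
  have hfkk : gform M k ek = 1 := by rw [hek, gform_single, gC_diag]
  have hfll : gform M l el = 1 := by rw [hel, gform_single, gC_diag]
  have hfkl : gform M k el = -c := by
    rw [hel, gform_single]
    unfold gC
    rw [← hm, hc]
  have hflk : gform M l ek = -c := by
    rw [hek, gform_single, ← gC_symm]
    unfold gC
    rw [← hm, hc]
  -- action of A
  have A_apply : ∀ v : B → ℝ, A v
      = v - (2 * gform M l v) • el - (2 * (gform M k v + 2*c*(gform M l v))) • ek := by
    intro v
    show grefl M k (grefl M l v) = _
    rw [grefl_apply, grefl_apply]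
    have : gform M k (v - (2 * gform M l v) • (Pi.single l 1 : B → ℝ))
        = gform M k v + 2*c*(gform M l v) := by
      rw [map_sub, map_smul, ← hel, hfkl]
      simp only [smul_eq_mul]
      ring
    rw [this, ← hel, ← hek]
  have Aek : A ek = (4*c^2-1) • ek + (2*c) • el := by
    rw [A_apply, hfkk, hflk]
    funext x
    simp only [Pi.sub_apply, Pi.add_apply, Pi.smul_apply, smul_eq_mul]
    ring
  have Ael : A el = (-(2*c)) • ek + (-1 : ℝ) • el := by
    rw [A_apply, hfll, hfkl]
    funext x
    simp only [Pi.sub_apply, Pi.add_apply, Pi.smul_apply, smul_eq_mul]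
    ring
  have CHek : A (A ek) = (4*c^2-2) • A ek - ek := by
    rw [Aek, map_add, map_smul, map_smul, Aek, Ael]
    funext x
    simp only [Pi.sub_apply, Pi.add_apply, Pi.smul_apply, smul_eq_mul]
    ring
  have CHel : A (A el) = (4*c^2-2) • A el - el := by
    rw [Ael, map_add, map_smul, map_smul, Aek, Ael]
    funext x
    simp only [Pi.sub_apply, Pi.add_apply, Pi.smul_apply, smul_eq_mul]
    ring
  -- `A ^ m` fixes `ek` and `el`
  have Apowm : (A ^ m) ek = ek ∧ (A ^ m) el = el := by
    rcases eq_or_lt_of_le hm2 with hm2' | hm3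
    · -- m = 2 : then c = 0
      have hc0 : c = 0 := by
        rw [hc, ← hm2']
        norm_num [Real.cos_pi_div_two]
      have hgen : ∀ e : B → ℝ, A (A e) = (4*c^2-2) • A e - e → A e = -e → (A ^ 2) e = e := by
        intro e hCH hAe
        rw [pow_two, Module.End.mul_apply, hCH, hAe, hc0]
        funext x
        simp only [Pi.sub_apply, Pi.smul_apply, Pi.neg_apply, smul_eq_mul]
        ring
      have hAek : A ek = -ek := by
        rw [Aek, hc0]
        funext x
        simp only [Pi.add_apply, Pi.smul_apply, Pi.neg_apply, smul_eq_mul]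
        ring
      have hAel : A el = -el := by
        rw [Ael, hc0]
        funext x
        simp only [Pi.add_apply, Pi.smul_apply, Pi.neg_apply, smul_eq_mul]
        ring
      rw [← hm2']
      exact ⟨hgen ek CHek hAek, hgen el CHel hAel⟩
    · -- m ≥ 3
      have hm3' : (2:ℝ) < (m:ℝ) := by exact_mod_cast hm3
      set α : ℝ := 2 * (Real.pi / (m:ℝ)) with hα
      have hmpos' : (0:ℝ) < (m:ℝ) := hmpos
      have hαpos : 0 < α := by
        rw [hα]
        positivity
      have hαlt : α < Real.pi := by
        rw [hα, ← mul_div_assoc, div_lt_iff₀ hmpos']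
        nlinarith [Real.pi_pos]
      have hsα : 0 < Real.sin α := Real.sin_pos_of_pos_of_lt_pi hαpos hαlt
      have hsα' : Real.sin α ≠ 0 := ne_of_gt hsα
      have hcosα : Real.cos α = 2*c^2 - 1 := by
        rw [hα, Real.cos_two_mul, ← hc]
      set u : ℕ → ℝ := fun n => Real.sin ((n:ℝ)*α) / Real.sin α with hu
      have hu0 : u 0 = 0 := by rw [hu]; simp
      have hu1 : u 1 = 1 := by
        rw [hu]
        simp only [Nat.cast_one, one_mul]
        exact div_self hsα'
      have hurec : ∀ n : ℕ, u (n+2) = (4*c^2-2) * u (n+1) - u n := by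
        intro n
        rw [hu]
        simp only
        have hcast2 : ((n+2 : ℕ):ℝ) = (n:ℝ)+2 := by push_cast; ring
        have hcast1 : ((n+1 : ℕ):ℝ) = (n:ℝ)+1 := by push_cast; ring
        rw [hcast2, hcast1]
        have e1 : ((n:ℝ)+2)*α = ((n:ℝ)+1)*α + α := by ring
        have e2 : (n:ℝ)*α = ((n:ℝ)+1)*α - α := by ring
        rw [e1, e2, Real.sin_add, Real.sin_sub, hcosα]
        field_simp
        ring
      have hupow : ∀ (e : B → ℝ), A (A e) = (4*c^2-2) • A e - e →
          ∀ n : ℕ, (A^(n+1)) e = u (n+1) • A e - u n • e := by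
        intro e hCH n
        induction n with
        | zero => rw [pow_one, hu1, hu0, one_smul, zero_smul, sub_zero]
        | succ n ih =>
          rw [pow_succ', Module.End.mul_apply, ih, map_sub, map_smul, map_smul, hCH,
            hurec n]
          funext x
          simp only [Pi.sub_apply, Pi.smul_apply, smul_eq_mul]
          ring
      have hum : u m = 0 := by
        rw [hu]
        simp only
        have : (m:ℝ)*α = 2*Real.pi := by
          rw [hα]
          field_simp
          try ring
        rw [this, Real.sin_two_pi, zero_div]
      have humm : u (m-1) = -1 := by
        rw [hu]
        simp only
        have h1m : (1:ℕ) ≤ m := by omega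
        have hc1 : ((m-1 : ℕ):ℝ) = (m:ℝ) - 1 := by
          rw [Nat.cast_sub h1m, Nat.cast_one]
        rw [hc1]
        have : ((m:ℝ)-1)*α = 2*Real.pi - α := by
          rw [hα]
          field_simp
          try ring
        rw [this, Real.sin_sub, Real.sin_two_pi, Real.cos_two_pi]
        rw [zero_mul, one_mul, zero_sub, neg_div, div_self hsα']
      have hmm : m - 1 + 1 = m := by omega
      constructor
      · have h1 := hupow ek CHek (m-1)
        rw [hmm] at h1
        rw [h1, hum, humm]
        funext x
        simp only [Pi.sub_apply, Pi.smul_apply, smul_eq_mul]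
        ring
      · have h1 := hupow el CHel (m-1)
        rw [hmm] at h1
        rw [h1, hum, humm]
        funext x
        simp only [Pi.sub_apply, Pi.smul_apply, smul_eq_mul]
        ring
  -- every vector is fixed by `A ^ m`
  have hc2 : c^2 - 1 ≠ 0 := by
    have hθpos : 0 < Real.pi / (m:ℝ) := by positivity
    have hθlt : Real.pi / (m:ℝ) < Real.pi := by
      rw [div_lt_iff₀ hmpos]
      nlinarith [Real.pi_pos]
    have hsθ : 0 < Real.sin (Real.pi / (m:ℝ)) := Real.sin_pos_of_pos_of_lt_pi hθpos hθlt
    have hid := Real.sin_sq_add_cos_sq (Real.pi / (m:ℝ))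
    have hce : c^2 - 1 = -(Real.sin (Real.pi/(m:ℝ)))^2 := by
      rw [hc]
      nlinarith [hid]
    rw [hce]
    exact neg_ne_zero.mpr (pow_ne_zero 2 (ne_of_gt hsθ))
  have hfix : ∀ v : B → ℝ, (A ^ m) v = v := by
    intro v
    set β : ℝ := gform M k v with hβ
    set γ : ℝ := gform M l v with hγ
    set x0 : ℝ := (β + c*γ)/(c^2-1) with hx0
    set y0 : ℝ := c*x0 - γ with hy0
    set v0 : B → ℝ := v + x0 • ek + y0 • el with hv0
    have hlv0 : gform M l v0 = 0 := by
      rw [hv0, map_add, map_add, map_smul, map_smul, hflk, hfll, ← hγ]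
      simp only [smul_eq_mul]
      rw [hy0]
      ring
    have hkv0 : gform M k v0 = 0 := by
      rw [hv0, map_add, map_add, map_smul, map_smul, hfkk, hfkl, ← hβ]
      simp only [smul_eq_mul]
      rw [hy0, hx0]
      field_simp
      ring
    have hAv0 : A v0 = v0 := by
      rw [A_apply, hlv0, hkv0]
      simp
    have hAnv0 : (A ^ m) v0 = v0 := by
      have : ∀ n : ℕ, (A ^ n) v0 = v0 := by
        intro n
        induction n with
        | zero => simp
        | succ n ih => rw [pow_succ, Module.End.mul_apply, hAv0, ih]
      exact this m
    have hveq : v = v0 - x0 • ek - y0 • el := by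
      rw [hv0]
      funext x
      simp only [Pi.add_apply, Pi.sub_apply, Pi.smul_apply, smul_eq_mul]
      ring
    calc (A^m) v = (A^m) v0 - x0 • (A^m) ek - y0 • (A^m) el := by
          rw [hveq, map_sub, map_sub, map_smul, map_smul]
      _ = v := by rw [hAnv0, Apowm.1, Apowm.2, ← hveq]
  apply LinearMap.ext
  intro v
  exact (hfix v).trans (Module.End.one_apply v).symm

end Geom

theorem simple_injective {B W : Type*} [Fintype B] [Group W] {M : CoxeterMatrix B}
    (cs : CoxeterSystem M W) : Function.Injective cs.simple := by
  letI : DecidableEq B := Classical.decEq B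
  intro i j hij
  by_contra hne
  have hlift := cs.lift_apply_simple (grefl_liftable M)
  have h1 : grefl M i = grefl M j := by
    have a1 := hlift i
    have a2 := hlift j
    rw [hij] at a1
    rw [a2] at a1
    exact a1.symm
  have h2 := congrFun (congrArg (fun f : Module.End ℝ (B → ℝ) => (f ((Pi.single i 1 : B → ℝ)) : B → ℝ))
    h1) i
  simp only [grefl_apply, gform_single, gC_diag] at h2
  simp only [Pi.sub_apply, Pi.smul_apply, Pi.single_eq_same, Pi.single_eq_of_ne hne,
    smul_eq_mul] at h2
  norm_num at h2

section Counting

variable {B W : Type*} [Group W] {M : CoxeterMatrix B} (cs : CoxeterSystem M W)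

/-- If `w₀` has maximal length, then lengths add in the decomposition `w₀ = u * (u⁻¹ * w₀)`. -/
theorem length_add_length_eq {w₀ : W} (hw₀ : ∀ w : W, cs.length w ≤ cs.length w₀) (u : W) :
    cs.length u + cs.length (u⁻¹ * w₀) = cs.length w₀ := by
  letI : DecidableEq W := Classical.decEq W
  set v := u⁻¹ * w₀ with hv
  have hw : w₀ = u * v := by rw [hv]; group
  obtain ⟨ω₀, h0red, h0⟩ := cs.exists_reduced_word' w₀
  obtain ⟨ωv, hvred, hveq⟩ := cs.exists_reduced_word' v
  obtain ⟨ωu, hured, hueq⟩ := cs.exists_reduced_word' u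
  set Ω : Finset W := (cs.rightInvSeq ω₀).toFinset with hΩ
  set Af : Finset W := (cs.rightInvSeq ωv).toFinset with hAf
  set Bf : Finset W := (cs.rightInvSeq ωu).toFinset.image (fun y => v⁻¹ * y * v) with hBf
  have hmemΩ : ∀ x, x ∈ Ω ↔ cfn cs w₀ x = 1 := by
    intro x
    rw [hΩ, List.mem_toFinset]
    constructor
    · intro hx
      rw [h0]
      exact cfn_of_mem_reduced cs h0red hx
    · intro hx
      rw [h0] at hx
      exact mem_ris_of_cfn_ne_zero cs (by rw [hx]; exact zmod2_one_ne_zero)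
  have hmemA : ∀ x, x ∈ Af ↔ cfn cs v x = 1 := by
    intro x
    rw [hAf, List.mem_toFinset]
    constructor
    · intro hx
      rw [hveq]
      exact cfn_of_mem_reduced cs hvred hx
    · intro hx
      rw [hveq] at hx
      exact mem_ris_of_cfn_ne_zero cs (by rw [hx]; exact zmod2_one_ne_zero)
  have hmemB : ∀ x, x ∈ Bf ↔ cfn cs u (v * x * v⁻¹) = 1 := by
    intro x
    rw [hBf, Finset.mem_image]
    constructor
    · rintro ⟨y, hy, rfl⟩
      have hxy : v * (v⁻¹ * y * v) * v⁻¹ = y := by group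
      rw [hxy, hueq]
      exact cfn_of_mem_reduced cs hured (List.mem_toFinset.mp hy)
    · intro hx
      refine ⟨v * x * v⁻¹, ?_, by group⟩
      rw [List.mem_toFinset]
      rw [hueq] at hx
      exact mem_ris_of_cfn_ne_zero cs (by rw [hx]; exact zmod2_one_ne_zero)
  have hinv : ∀ t : W, cs.IsReflection t → cfn cs w₀ t = 1 := by
    intro t ht
    rw [cfn_eq_one_iff cs ht]
    have hne := ht.length_mul_left_ne w₀
    have := hw₀ (w₀ * t)
    omega
  have hAΩ : Af ⊆ Ω := by
    intro x hx
    refine (hmemΩ x).mpr (hinv x ?_)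
    exact cs.isReflection_of_mem_rightInvSeq ωv (List.mem_toFinset.mp (hAf ▸ hx))
  have hBΩ : Bf ⊆ Ω := by
    intro x hx
    have h1 := (hmemB x).mp hx
    have hmem : v * x * v⁻¹ ∈ cs.rightInvSeq ωu := by
      rw [hueq] at h1
      exact mem_ris_of_cfn_ne_zero cs (by rw [h1]; exact zmod2_one_ne_zero)
    have hrefl : cs.IsReflection (v * x * v⁻¹) :=
      cs.isReflection_of_mem_rightInvSeq ωu hmem
    have hx' : cs.IsReflection x := by
      have := hrefl.conj v⁻¹
      have he : v⁻¹ * (v * x * v⁻¹) * v⁻¹⁻¹ = x := by group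
      rwa [he] at this
    exact (hmemΩ x).mpr (hinv x hx')
  have hco : ∀ x, cfn cs w₀ x = cfn cs v x + cfn cs u (v * x * v⁻¹) := by
    intro x
    rw [hw]
    exact cfn_mul cs u v x
  have hdisj : Disjoint Af Bf := by
    rw [Finset.disjoint_left]
    intro x hxA hxB
    have h1 := (hmemA x).mp hxA
    have h2 := (hmemB x).mp hxB
    have h3 := (hmemΩ x).mp (hAΩ hxA)
    rw [hco x, h1, h2] at h3
    exact zmod2_one_ne_zero (by rw [← h3]; decide)
  have hunion : Ω = Af ∪ Bf := by
    apply Finset.Subset.antisymm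
    · intro x hx
      have h1 := (hmemΩ x).mp hx
      rw [hco x] at h1
      rcases zmod2_cases (cfn cs v x) with hv0 | hv1
      · rw [hv0, zero_add] at h1
        exact Finset.mem_union_right _ ((hmemB x).mpr h1)
      · exact Finset.mem_union_left _ ((hmemA x).mpr hv1)
    · exact Finset.union_subset hAΩ hBΩ
  have hcardΩ : Ω.card = cs.length w₀ := by
    rw [hΩ, List.toFinset_card_of_nodup h0red.nodup_rightInvSeq, cs.length_rightInvSeq, h0]
    exact h0red.symm
  have hcardA : Af.card = cs.length v := by
    rw [hAf, List.toFinset_card_of_nodup hvred.nodup_rightInvSeq, cs.length_rightInvSeq, hveq]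
    exact hvred.symm
  have hcardB : Bf.card = cs.length u := by
    have hinj : Function.Injective (fun y : W => v⁻¹ * y * v) := by
      intro a b h
      simpa using congrArg (fun z => v * z * v⁻¹) h
    rw [hBf, Finset.card_image_of_injective _ hinj,
      List.toFinset_card_of_nodup hured.nodup_rightInvSeq, cs.length_rightInvSeq, hueq]
    exact hured.symm
  have := Finset.card_union_of_disjoint hdisj
  rw [← hunion, hcardΩ, hcardA, hcardB] at this
  omega

end Counting

end LazyWalkAux

/-- The number of lazy walks of length `n` (each step an element of `Option B`,
interpreted as `1` for `none` and the simple reflection `cs.simple i` for `some i`)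
whose steps multiply, in order, to `w`. -/
noncomputable def lazyWalkCount {B W : Type*} [Group W] {M : CoxeterMatrix B}
    (cs : CoxeterSystem M W) (n : ℕ) (w : W) : ℕ :=
  Nat.card {f : Fin n → Option B //
    (List.ofFn fun j => ((f j).elim 1 cs.simple)).prod = w}


namespace LazyWalkAux

section Walk

variable {B W : Type*} [Group W] {M : CoxeterMatrix B} (cs : CoxeterSystem M W)

theorem lazyWalkCount_zero_one :
    lazyWalkCount cs 0 (1 : W) = 1 := by
  unfold lazyWalkCount
  have hall : ∀ f : Fin 0 → Option B,
      (List.ofFn fun j => ((f j).elim 1 cs.simple)).prod = 1 := by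
    intro f
    simp
  calc Nat.card {f : Fin 0 → Option B //
        (List.ofFn fun j => ((f j).elim 1 cs.simple)).prod = 1}
      = Nat.card (Fin 0 → Option B) := Nat.card_congr (Equiv.subtypeUnivEquiv hall)
    _ = 1 := Nat.card_unique

theorem lazyWalkCount_zero_ne {w : W} (hw : w ≠ 1) :
    lazyWalkCount cs 0 w = 0 := by
  unfold lazyWalkCount
  have : IsEmpty {f : Fin 0 → Option B //
      (List.ofFn fun j => ((f j).elim 1 cs.simple)).prod = w} := by
    constructor
    rintro ⟨f, hf⟩
    apply hw
    rw [← hf]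
    simp
  exact Nat.card_of_isEmpty

theorem lazyWalkCount_succ [Fintype B] (n : ℕ) (w : W) :
    lazyWalkCount cs (n+1) w
      = lazyWalkCount cs n w + ∑ i : B, lazyWalkCount cs n (cs.simple i * w) := by
  classical
  have key : ∀ f : Fin (n+1) → Option B,
      (List.ofFn fun j => ((f j).elim 1 cs.simple)).prod
        = ((f 0).elim 1 cs.simple) * (List.ofFn fun j : Fin n =>
            ((f j.succ).elim 1 cs.simple)).prod := by
    intro f
    rw [List.ofFn_succ, List.prod_cons]
  let e1 : {f : Fin (n+1) → Option B //
        (List.ofFn fun j => ((f j).elim 1 cs.simple)).prod = w}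
      ≃ {p : Option B × (Fin n → Option B) //
        (p.1.elim 1 cs.simple) * (List.ofFn fun j : Fin n =>
          ((p.2 j).elim 1 cs.simple)).prod = w} := by
    apply Equiv.subtypeEquiv ((Fin.consEquiv fun _ => Option B).symm)
    intro f
    rw [key f]
    rfl
  let e2 : {p : Option B × (Fin n → Option B) //
        (p.1.elim 1 cs.simple) * (List.ofFn fun j : Fin n =>
          ((p.2 j).elim 1 cs.simple)).prod = w}
      ≃ Σ o : Option B, {g : Fin n → Option B //
        (o.elim 1 cs.simple) * (List.ofFn fun j : Fin n =>
          ((g j).elim 1 cs.simple)).prod = w} :=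
    Equiv.subtypeProdEquivSigmaSubtype
      (fun (o : Option B) (g : Fin n → Option B) =>
        (o.elim 1 cs.simple) * (List.ofFn fun j : Fin n =>
          ((g j).elim 1 cs.simple)).prod = w)
  have hcardeq : lazyWalkCount cs (n+1) w
      = ∑ o : Option B, Nat.card {g : Fin n → Option B //
          (o.elim 1 cs.simple) * (List.ofFn fun j : Fin n =>
            ((g j).elim 1 cs.simple)).prod = w} := by
    rw [lazyWalkCount, Nat.card_congr (e1.trans e2)]
    rw [Nat.card_eq_fintype_card, Fintype.card_sigma]
    exact Finset.sum_congr rfl fun o _ => (Nat.card_eq_fintype_card).symm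
  rw [hcardeq, Fintype.sum_option]
  congr 1
  · show Nat.card _ = lazyWalkCount cs n w
    rw [lazyWalkCount]
    apply Nat.card_congr
    apply Equiv.subtypeEquivRight
    intro g
    simp
  · apply Finset.sum_congr rfl
    intro i _
    show Nat.card _ = lazyWalkCount cs n (cs.simple i * w)
    rw [lazyWalkCount]
    apply Nat.card_congr
    apply Equiv.subtypeEquivRight
    intro g
    show cs.simple i * _ = w ↔ _
    constructor
    · intro h
      rw [← h, ← mul_assoc, cs.simple_mul_simple_self, one_mul]
    · intro h
      rw [h, ← mul_assoc, cs.simple_mul_simple_self, one_mul]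

/-- The key "edge" monotonicity: going up in the right weak order does not increase
the lazy walk count. -/
theorem lazyWalkCount_mul_simple_le [Fintype B] : ∀ n : ℕ, ∀ (w : W) (j : B),
    cs.length (w * cs.simple j) = cs.length w + 1 →
    lazyWalkCount cs n (w * cs.simple j) ≤ lazyWalkCount cs n w := by
  intro n
  induction n with
  | zero =>
    intro w j hw
    have h1 : w * cs.simple j ≠ 1 := by
      intro h
      rw [h, cs.length_one] at hw
      omega
    rw [lazyWalkCount_zero_ne cs h1]
    omega
  | succ n ih =>
    intro w j hw
    classical
    rw [lazyWalkCount_succ, lazyWalkCount_succ]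
    have hstand := ih w j hw
    have hsjrefl : cs.IsReflection (cs.simple j) := cs.isReflection_simple j
    have hcw : cfn cs w (cs.simple j) = 0 := by
      rcases zmod2_cases (cfn cs w (cs.simple j)) with h | h
      · exact h
      · exfalso
        have := (cfn_eq_one_iff cs hsjrefl).mp h
        omega
    set t₀ : W := w * cs.simple j * w⁻¹ with ht₀
    have hterm : ∀ i : B, cs.simple i ≠ t₀ →
        lazyWalkCount cs n (cs.simple i * (w * cs.simple j))
          ≤ lazyWalkCount cs n (cs.simple i * w) := by
      intro i hi
      have hlen : cs.length ((cs.simple i * w) * cs.simple j)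
          = cs.length (cs.simple i * w) + 1 := by
        rcases cs.length_mul_simple (cs.simple i * w) j with h | h
        · exact h
        · exfalso
          have hne := cs.length_mul_simple_ne (cs.simple i * w) j
          have hlt : cs.length ((cs.simple i * w) * cs.simple j)
              < cs.length (cs.simple i * w) := by omega
          have h1 : cfn cs (cs.simple i * w) (cs.simple j) = 1 :=
            (cfn_eq_one_iff cs hsjrefl).mpr hlt
          rw [cfn_mul, hcw, zero_add, cfn_simple] at h1
          exact hi (dlt_eq_one_iff.mp h1).symm
      have := ih (cs.simple i * w) j hlen
      rwa [mul_assoc] at this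
    by_cases hex : ∃ i₀ : B, cs.simple i₀ = t₀
    · obtain ⟨i₀, hi₀⟩ := hex
      have hbad1 : cs.simple i₀ * (w * cs.simple j) = w := by
        rw [hi₀, ht₀]
        simp [mul_assoc, cs.simple_mul_simple_self]
      have hbad2 : cs.simple i₀ * w = w * cs.simple j := by
        rw [hi₀, ht₀]
        simp [mul_assoc]
      rw [← Finset.add_sum_erase Finset.univ
            (fun i => lazyWalkCount cs n (cs.simple i * (w * cs.simple j)))
            (Finset.mem_univ i₀),
          ← Finset.add_sum_erase Finset.univ
            (fun i => lazyWalkCount cs n (cs.simple i * w))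
            (Finset.mem_univ i₀)]
      rw [hbad1, hbad2]
      have hsum : ∑ i ∈ Finset.univ.erase i₀,
            lazyWalkCount cs n (cs.simple i * (w * cs.simple j))
          ≤ ∑ i ∈ Finset.univ.erase i₀, lazyWalkCount cs n (cs.simple i * w) := by
        apply Finset.sum_le_sum
        intro i hi
        apply hterm
        intro hsi
        exact (Finset.ne_of_mem_erase hi) (simple_injective cs (hsi.trans hi₀.symm))
      omega
    · push_neg at hex
      have hsum : ∑ i : B, lazyWalkCount cs n (cs.simple i * (w * cs.simple j))
          ≤ ∑ i : B, lazyWalkCount cs n (cs.simple i * w) :=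
        Finset.sum_le_sum fun i _ => hterm i (hex i)
      omega

theorem lazyWalkCount_longest_le_aux [Fintype B] {w₀ : W}
    (hw₀ : ∀ w : W, cs.length w ≤ cs.length w₀) (n : ℕ) :
    ∀ d : ℕ, ∀ w : W, cs.length w₀ ≤ cs.length w + d →
      lazyWalkCount cs n w₀ ≤ lazyWalkCount cs n w := by
  intro d
  induction d with
  | zero =>
    intro w hle
    have hW := length_add_length_eq cs hw₀ w
    have h0 : cs.length (w⁻¹ * w₀) = 0 := by omega
    have h1 : w⁻¹ * w₀ = 1 := cs.length_eq_zero_iff.mp h0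
    have h2 : w = w₀ := inv_mul_eq_one.mp h1
    rw [h2]
  | succ d ihd =>
    intro w hle
    by_cases hc : cs.length w₀ ≤ cs.length w + d
    · exact ihd w hc
    push_neg at hc
    have hW := length_add_length_eq cs hw₀ w
    have hv1 : cs.length (w⁻¹ * w₀) ≠ 0 := by omega
    obtain ⟨ω, hred, hveq⟩ := cs.exists_reduced_word' (w⁻¹ * w₀)
    cases ω with
    | nil =>
      exfalso
      apply hv1
      rw [hveq]
      simp
    | cons j ω' =>
      set w' := w * cs.simple j with hw'
      have hW' := length_add_length_eq cs hw₀ w'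
      have hsub : w'⁻¹ * w₀ = cs.wordProd ω' := by
        rw [hw', mul_inv_rev, cs.inv_simple, mul_assoc, hveq, cs.wordProd_cons,
          cs.simple_mul_simple_cancel_left]
      have hlen2 : cs.length (w'⁻¹ * w₀) ≤ ω'.length := by
        rw [hsub]
        exact cs.length_wordProd_le ω'
      have hredlen : cs.length (w⁻¹ * w₀) = ω'.length + 1 := by
        have h3 : cs.length (cs.wordProd (j :: ω')) = (j :: ω').length := hred
        rw [← hveq] at h3
        rw [h3]
        simp
      have hub := cs.length_mul_simple w j
      rw [← hw'] at hub
      have hl1 : cs.length w' = cs.length w + 1 := by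
        rcases hub with h | h <;> omega
      have hl1' : cs.length (w * cs.simple j) = cs.length w + 1 := by
        rw [← hw']
        exact hl1
      have hnear := ihd w' (by omega)
      refine le_trans hnear ?_
      rw [hw']
      exact lazyWalkCount_mul_simple_le cs n w j hl1'

end Walk

end LazyWalkAux


/-- For the lazy simple random walk on a finite Coxeter group, the longest element is
the least likely element after any number of steps. -/
theorem lazyWalkCount_longest_le {B W : Type*} [Fintype B] [Group W] [Finite W]
    {M : CoxeterMatrix B} (cs : CoxeterSystem M W) (w₀ : W)
    (hw₀ : ∀ w : W, cs.length w ≤ cs.length w₀) (n : ℕ) (w : W) :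
    lazyWalkCount cs n w₀ ≤ lazyWalkCount cs n w := by
  exact LazyWalkAux.lazyWalkCount_longest_le_aux cs hw₀ n (cs.length w₀) w (by omega)
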